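/- Second-order Worpitzky identity: for n ≥ 1 and all natural numbers x ≥ n, Σ_{k=0}^{n-1} T^(2)_{n,k} · C(x+k, 2n) = c(x, x-n), where c(x, x-n) is the unsigned Stirling number of the first kind. -/
import Mathlib


/-- The `m`th-order Eulerian numbers `T^(m)_{n,k}`, with integer descent index `k`
(so `T^(m)_{n,k} = 0` for `k < 0` or `k ≥ n`). -/
def eulerianT (m : ℕ) : ℕ → ℤ → ℤ
  | 0, _ => 0
  | 1, k => if k = 0 then 1 else 0
  | n + 2, k =>
      if k < 0 ∨ (n : ℤ) + 2 ≤ k then 0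
      else (k + 1) * eulerianT m (n + 1) k +
        ((m : ℤ) * ((n : ℤ) + 2) - k - (m : ℤ) + 1) * eulerianT m (n + 1) (k - 1)

/-- Unsigned Stirling numbers of the first kind `c(n,j)` (Stirling cycle numbers),
with integer index `j` (so `c(n,j) = 0` for `j < 0`). -/
def stirlingFirst : ℕ → ℤ → ℕ
  | 0, j => if j = 0 then 1 else 0
  | n + 1, j => n * stirlingFirst n j + stirlingFirst n (j - 1)

lemma eulerianT_neg (m n : ℕ) (k : ℤ) (hk : k < 0) : eulerianT m n k = 0 := by
  match n with
  | 0 => rfl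
  | 1 => rw [eulerianT, if_neg (by omega)]
  | n+2 => rw [eulerianT, if_pos (Or.inl hk)]

lemma eulerianT_ge (m n : ℕ) (k : ℤ) (hk : (n:ℤ) ≤ k) : eulerianT m n k = 0 := by
  match n with
  | 0 => rfl
  | 1 => rw [eulerianT, if_neg (by omega)]
  | n+2 => rw [eulerianT, if_pos (Or.inr (by push_cast at hk ⊢; omega))]

lemma choose_key (a k : ℕ) :
    ((k:ℤ)+1) * (a.choose (k+1) : ℤ) = ((a:ℤ) - k) * (a.choose k : ℤ) := by
  rcases le_or_gt k a with h | h
  · have h1 := Nat.choose_succ_right_eq a k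
    have h2 : ((a - k : ℕ) : ℤ) = (a:ℤ) - k := by
      exact_mod_cast Int.ofNat_sub h
    have h3 := congrArg (Nat.cast : ℕ → ℤ) h1
    push_cast at h3
    rw [h2] at h3
    linear_combination h3
  · rw [Nat.choose_eq_zero_of_lt h, Nat.choose_eq_zero_of_lt (h.trans (Nat.lt_succ_self k))]
    simp

lemma stirling_gt (x : ℕ) : ∀ j : ℤ, (x:ℤ) < j → stirlingFirst x j = 0 := by
  induction x with
  | zero => intro j h; rw [stirlingFirst, if_neg (by omega)]
  | succ x ih =>
      intro j h
      rw [stirlingFirst, ih j (by push_cast at h ⊢; omega), ih (j-1) (by push_cast at h ⊢; omega)]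
      ring

lemma stirling_self (x : ℕ) : stirlingFirst x (x:ℤ) = 1 := by
  induction x with
  | zero => rfl
  | succ x ih =>
      rw [stirlingFirst]
      push_cast
      rw [stirling_gt x ((x:ℤ)+1) (by push_cast; omega),
        show (x:ℤ)+1-1 = (x:ℤ) by ring, ih]
      ring

lemma stirling_pred (x : ℕ) : (stirlingFirst x ((x:ℤ)-1) : ℤ) = (x.choose 2 : ℤ) := by
  induction x with
  | zero => rw [stirlingFirst, if_neg (by omega)]; rfl
  | succ x ih =>
      have : ((x+1 : ℕ):ℤ) - 1 = (x:ℤ) := by push_cast; ring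
      rw [this, stirlingFirst, stirling_self]
      push_cast [ih]
      rw [show (x+1).choose 2 = x.choose 1 + x.choose 2 from Nat.choose_succ_succ x 1]
      push_cast [Nat.choose_one_right]
      push_cast at ih
      linarith

lemma pointwise (x k N : ℕ) :
    ((k:ℤ)+1) * ((x+k).choose (2*N+3) : ℤ) + (2*(N:ℤ)+2-(k:ℤ)) * ((x+k+1).choose (2*N+3) : ℤ)
      = (x:ℤ) * ((x+k).choose (2*N+2) : ℤ) := by
  have hp : (x+k+1).choose (2*N+3) = (x+k).choose (2*N+2) + (x+k).choose (2*N+3) :=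
    Nat.choose_succ_succ' (x+k) (2*N+2)
  have hk := choose_key (x+k) (2*N+2)
  rw [hp]
  push_cast
  push_cast at hk
  linear_combination hk

lemma key_sum (m x : ℕ) :
    ∑ k ∈ Finset.range (m+2), eulerianT 2 (m+2) (k:ℤ) * ((x+k).choose (2*m+3) : ℤ)
      = (x:ℤ) * ∑ k ∈ Finset.range (m+1), eulerianT 2 (m+1) (k:ℤ) * ((x+k).choose (2*m+2) : ℤ) := by
  have hT : ∀ k ∈ Finset.range (m+2), eulerianT 2 (m+2) (k:ℤ) * ((x+k).choose (2*m+3) : ℤ) =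
      ((k:ℤ)+1) * eulerianT 2 (m+1) (k:ℤ) * ((x+k).choose (2*m+3) : ℤ)
        + (2*(m:ℤ)+3-(k:ℤ)) * eulerianT 2 (m+1) ((k:ℤ)-1) * ((x+k).choose (2*m+3) : ℤ) := by
    intro k hk
    simp only [Finset.mem_range] at hk
    rw [eulerianT, if_neg (by push_cast; omega)]
    push_cast
    ring
  rw [Finset.sum_congr rfl hT, Finset.sum_add_distrib]
  have h1 : ∑ k ∈ Finset.range (m+2),
      ((k:ℤ)+1) * eulerianT 2 (m+1) (k:ℤ) * ((x+k).choose (2*m+3) : ℤ)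
      = ∑ k ∈ Finset.range (m+1),
        ((k:ℤ)+1) * eulerianT 2 (m+1) (k:ℤ) * ((x+k).choose (2*m+3) : ℤ) := by
    rw [Finset.sum_range_succ, eulerianT_ge 2 (m+1) (m+1 : ℕ) (by push_cast; omega)]
    ring
  have h2 : ∑ k ∈ Finset.range (m+2),
      (2*(m:ℤ)+3-(k:ℤ)) * eulerianT 2 (m+1) ((k:ℤ)-1) * ((x+k).choose (2*m+3) : ℤ)
      = ∑ k ∈ Finset.range (m+1),
        (2*(m:ℤ)+2-(k:ℤ)) * eulerianT 2 (m+1) (k:ℤ) * ((x+k+1).choose (2*m+3) : ℤ) := by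
    rw [Finset.sum_range_succ']
    have hz : eulerianT 2 (m+1) (((0:ℕ):ℤ) - 1) = 0 := eulerianT_neg _ _ _ (by norm_num)
    rw [hz, mul_zero, zero_mul, add_zero]
    refine Finset.sum_congr rfl ?_
    intro k hk
    rw [show (((k+1:ℕ)):ℤ) - 1 = (k:ℤ) from by push_cast; ring,
      show x + (k+1) = x + k + 1 from by omega]
    push_cast
    ring
  rw [h1, h2, ← Finset.sum_add_distrib, Finset.mul_sum]
  refine Finset.sum_congr rfl ?_
  intro k hk
  have hpw := pointwise x k m
  linear_combination eulerianT 2 (m+1) (k:ℤ) * hpw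

lemma stirling_neg (x : ℕ) : ∀ j : ℤ, j < 0 → stirlingFirst x j = 0 := by
  induction x with
  | zero => intro j h; rw [stirlingFirst, if_neg (by omega)]
  | succ x ih =>
      intro j h
      rw [stirlingFirst, ih j (by omega), ih (j-1) (by omega)]
      ring

lemma stirling_zero (n : ℕ) : stirlingFirst (n+1) 0 = 0 := by
  induction n with
  | zero => rw [stirlingFirst, stirling_neg 0 ((0:ℤ)-1) (by omega), stirlingFirst, if_pos rfl]
  | succ n ih => rw [stirlingFirst, ih, stirling_neg (n+1) ((0:ℤ)-1) (by omega)]; ring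

theorem worpitzky_second_order (n x : ℕ) (hn : 1 ≤ n) (hx : n ≤ x) :
    ∑ k ∈ Finset.range n, eulerianT 2 n (k : ℤ) * ((x + k).choose (2 * n) : ℤ) =
      (stirlingFirst x ((x : ℤ) - n) : ℤ) := by
  induction n, hn using Nat.le_induction generalizing x with
  | base =>
      rw [Finset.sum_range_one]
      have h1 : eulerianT 2 1 ((0:ℕ):ℤ) = 1 := by
        rw [eulerianT, if_pos (by norm_num)]
      rw [h1, one_mul, show ((1:ℕ):ℤ) = 1 from rfl, stirling_pred x]
      norm_num
  | succ n hn ih =>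
      obtain ⟨m, rfl⟩ : ∃ m, n = m + 1 := ⟨n - 1, by omega⟩
      induction x, hx using Nat.le_induction with
      | base =>
          rw [show ((↑(m+1+1):ℤ)) - (↑(m+1+1):ℤ) = 0 from by ring, stirling_zero]
          rw [Nat.cast_zero]
          refine Finset.sum_eq_zero ?_
          intro k hk
          simp only [Finset.mem_range] at hk
          rw [Nat.choose_eq_zero_of_lt (by omega)]
          simp
      | succ x hx ih2 =>
          simp only [show m+1+1 = m+2 from rfl] at ih2 ⊢
          have ihx := ih x (by omega)
          rw [show 2*(m+1) = 2*m+2 from by ring] at ihx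
          have hsplit : ∑ k ∈ Finset.range (m+2),
                eulerianT 2 (m+2) (k:ℤ) * ((x+1+k).choose (2*(m+2)) : ℤ)
              = (∑ k ∈ Finset.range (m+2), eulerianT 2 (m+2) (k:ℤ) * ((x+k).choose (2*(m+2)) : ℤ))
                + ∑ k ∈ Finset.range (m+2), eulerianT 2 (m+2) (k:ℤ) * ((x+k).choose (2*m+3) : ℤ) := by
            rw [← Finset.sum_add_distrib]
            refine Finset.sum_congr rfl ?_
            intro k hk
            rw [show x+1+k = (x+k)+1 from by omega, show 2*(m+2) = (2*m+3)+1 from by ring,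
              Nat.choose_succ_succ' (x+k) (2*m+3)]
            push_cast
            ring
          have hR : ((stirlingFirst (x+1) ((↑(x+1):ℤ) - (↑(m+2):ℤ)) : ℕ) : ℤ)
              = (x:ℤ) * ((stirlingFirst x ((x:ℤ) - (↑(m+1):ℤ)) : ℕ) : ℤ)
                + ((stirlingFirst x ((x:ℤ) - (↑(m+2):ℤ)) : ℕ) : ℤ) := by
            rw [stirlingFirst]
            push_cast
            rw [show ((x:ℤ)+1-((m:ℤ)+2)) = (x:ℤ)-((m:ℤ)+1) from by ring,
                show ((x:ℤ)-((m:ℤ)+1)-1) = (x:ℤ)-((m:ℤ)+2) from by ring]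
          have hi2 : ∑ k ∈ Finset.range (m+2), eulerianT 2 (m+2) (k:ℤ) * ((x+k).choose (2*(m+2)) : ℤ)
              = ((stirlingFirst x ((x:ℤ) - (↑(m+2):ℤ)) : ℕ) : ℤ) := ih2
          rw [hsplit, hi2, key_sum m x, ihx, hR]
          push_cast
          ring
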